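/- arXiv:1707.03575 — 3 statements merged into one kernel-verified Lean document; each statement's English description precedes it below -/
import Mathlib

section
/- (Lemma 2, front estimate.) Fix x* > 0 and t₁ > 0, and let u, v : [0,x*] → ℝ be continuous. Then for every t ∈ [t₁, min(τ*_u, τ*_v)], |Υ^u(t) − Υ^v(t)| ≤ C_{u,v}·‖u − v‖, where C_{u,v} = exp((x*)⁴·M_{u,v}⁶/t₁²)·(x*)⁵·M_{u,v}⁶/t₁² and M_{u,v} = exp(max(‖u‖,‖v‖)). -/
open Set

noncomputable def Fu (xs : ℝ) (h : 0 ≤ xs) (u : C(Icc (0:ℝ) xs, ℝ)) (x : ℝ) : ℝ :=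
  ∫ z in (0:ℝ)..x, Real.exp (-(u (projIcc 0 xs h z)))

noncomputable def Wu (xs : ℝ) (h : 0 ≤ xs) (u : C(Icc (0:ℝ) xs, ℝ)) (x : ℝ) : ℝ :=
  ∫ ξ in (0:ℝ)..x, Fu xs h u ξ

noncomputable def tau (xs : ℝ) (h : 0 ≤ xs) (u : C(Icc (0:ℝ) xs, ℝ)) : ℝ :=
  Wu xs h u xs

/- ---------- auxiliary lemmas ---------- -/

lemma abs_exp_sub_exp_le (a b : ℝ) :
    |Real.exp a - Real.exp b| ≤ Real.exp (max a b) * |a - b| := by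
  wlog h : b ≤ a generalizing a b
  · rw [abs_sub_comm, max_comm, abs_sub_comm a b]
    exact this b a (le_of_not_ge h)
  have key : Real.exp a - Real.exp b ≤ (a - b) * Real.exp a := by
    have h1 := Real.add_one_le_exp (b - a)
    have h2 : (b - a + 1) * Real.exp a ≤ Real.exp (b - a) * Real.exp a :=
      mul_le_mul_of_nonneg_right h1 (Real.exp_pos a).le
    rw [← Real.exp_add] at h2
    have h3 : Real.exp (b - a + a) = Real.exp b := by ring_nf
    nlinarith [Real.exp_pos a]
  have hba : Real.exp b ≤ Real.exp a := Real.exp_le_exp.mpr h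
  rw [abs_of_nonneg (by linarith), abs_of_nonneg (by linarith), max_eq_left h]
  linarith [key]

section aux
variable (xs : ℝ) (h : 0 ≤ xs) (u v : C(Icc (0:ℝ) xs, ℝ))

lemma gu_cont : Continuous fun z => Real.exp (-(u (projIcc 0 xs h z))) :=
  Real.continuous_exp.comp ((u.continuous.comp continuous_projIcc).neg)

lemma gu_ii (a b : ℝ) :
    IntervalIntegrable (fun z => Real.exp (-(u (projIcc 0 xs h z))))
      MeasureTheory.volume a b :=
  (gu_cont xs h u).intervalIntegrable a b

lemma gu_le (z : ℝ) :
    Real.exp (-(u (projIcc 0 xs h z))) ≤ Real.exp ‖u‖ := by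
  apply Real.exp_le_exp.mpr
  have := u.norm_coe_le_norm (projIcc 0 xs h z)
  rw [Real.norm_eq_abs] at this
  have := abs_le.mp this
  linarith [this.1]

lemma gu_ge (z : ℝ) :
    Real.exp (-‖u‖) ≤ Real.exp (-(u (projIcc 0 xs h z))) := by
  apply Real.exp_le_exp.mpr
  have := u.norm_coe_le_norm (projIcc 0 xs h z)
  rw [Real.norm_eq_abs] at this
  have := abs_le.mp this
  linarith [this.2]

lemma Fu_add (a b : ℝ) :
    Fu xs h u b = Fu xs h u a + ∫ z in a..b, Real.exp (-(u (projIcc 0 xs h z))) := by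
  unfold Fu
  rw [intervalIntegral.integral_add_adjacent_intervals (gu_ii xs h u 0 a) (gu_ii xs h u a b)]

lemma Fu_mono : Monotone (Fu xs h u) := by
  intro a b hab
  have h0 : (0:ℝ) ≤ ∫ z in a..b, Real.exp (-(u (projIcc 0 xs h z))) :=
    intervalIntegral.integral_nonneg hab (fun z _ => (Real.exp_pos _).le)
  have := Fu_add xs h u a b
  linarith

lemma Fu_ii (a b : ℝ) :
    IntervalIntegrable (Fu xs h u) MeasureTheory.volume a b :=
  (Fu_mono xs h u).intervalIntegrable

lemma Fu_le (x : ℝ) (hx : 0 ≤ x) : Fu xs h u x ≤ x * Real.exp ‖u‖ := by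
  unfold Fu
  calc (∫ z in (0:ℝ)..x, Real.exp (-(u (projIcc 0 xs h z))))
      ≤ ∫ _z in (0:ℝ)..x, Real.exp ‖u‖ :=
        intervalIntegral.integral_mono_on hx (gu_ii xs h u 0 x)
          intervalIntegrable_const (fun z _ => gu_le xs h u z)
    _ = x * Real.exp ‖u‖ := by simp [mul_comm]

lemma Fu_ge (x : ℝ) (hx : 0 ≤ x) : x * Real.exp (-‖u‖) ≤ Fu xs h u x := by
  unfold Fu
  calc x * Real.exp (-‖u‖) = ∫ _z in (0:ℝ)..x, Real.exp (-‖u‖) := by simp [mul_comm]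
    _ ≤ ∫ z in (0:ℝ)..x, Real.exp (-(u (projIcc 0 xs h z))) :=
        intervalIntegral.integral_mono_on hx intervalIntegrable_const
          (gu_ii xs h u 0 x) (fun z _ => gu_ge xs h u z)

lemma Wu_add (a b : ℝ) :
    Wu xs h u b = Wu xs h u a + ∫ ξ in a..b, Fu xs h u ξ := by
  unfold Wu
  rw [intervalIntegral.integral_add_adjacent_intervals (Fu_ii xs h u 0 a) (Fu_ii xs h u a b)]

lemma Wu_le_mul (x : ℝ) (hx : 0 ≤ x) : Wu xs h u x ≤ x * Fu xs h u x := by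
  unfold Wu
  calc (∫ ξ in (0:ℝ)..x, Fu xs h u ξ)
      ≤ ∫ _ξ in (0:ℝ)..x, Fu xs h u x :=
        intervalIntegral.integral_mono_on hx (Fu_ii xs h u 0 x)
          intervalIntegrable_const (fun ξ hξ => Fu_mono xs h u hξ.2)
    _ = x * Fu xs h u x := by simp [mul_comm]

lemma Wu_diff_ge (a b : ℝ) (hba : b ≤ a) :
    (a - b) * Fu xs h u b ≤ Wu xs h u a - Wu xs h u b := by
  have hadd := Wu_add xs h u b a
  have : (a - b) * Fu xs h u b ≤ ∫ ξ in b..a, Fu xs h u ξ := by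
    calc (a - b) * Fu xs h u b = ∫ _ξ in b..a, Fu xs h u b := by simp [mul_comm]
      _ ≤ ∫ ξ in b..a, Fu xs h u ξ :=
          intervalIntegral.integral_mono_on hba intervalIntegrable_const
            (Fu_ii xs h u b a) (fun ξ hξ => Fu_mono xs h u hξ.1)
  linarith

lemma Fu_sub_le (M : ℝ) (hu : Real.exp ‖u‖ ≤ M) (hv : Real.exp ‖v‖ ≤ M)
    (x : ℝ) (hx : 0 ≤ x) :
    |Fu xs h u x - Fu xs h v x| ≤ x * (M * ‖u - v‖) := by
  have hptwise : ∀ z : ℝ,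
      |Real.exp (-(u (projIcc 0 xs h z))) - Real.exp (-(v (projIcc 0 xs h z)))|
        ≤ M * ‖u - v‖ := by
    intro z
    set p := projIcc 0 xs h z
    have h1 := abs_exp_sub_exp_le (-(u p)) (-(v p))
    have h2 : Real.exp (max (-(u p)) (-(v p))) ≤ M := by
      have hnu : ‖u p‖ ≤ ‖u‖ := u.norm_coe_le_norm p
      have hnv : ‖v p‖ ≤ ‖v‖ := v.norm_coe_le_norm p
      rw [Real.norm_eq_abs] at hnu hnv
      have hu' := abs_le.mp hnu
      have hv' := abs_le.mp hnv
      rcases max_cases (-(u p)) (-(v p)) with ⟨he, _⟩ | ⟨he, _⟩ <;> rw [he]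
      · exact le_trans (Real.exp_le_exp.mpr (by linarith [hu'.1])) hu
      · exact le_trans (Real.exp_le_exp.mpr (by linarith [hv'.1])) hv
    have h3 : |(-(u p)) - (-(v p))| ≤ ‖u - v‖ := by
      have := (u - v).norm_coe_le_norm p
      rw [ContinuousMap.sub_apply, Real.norm_eq_abs] at this
      calc |(-(u p)) - (-(v p))| = |u p - v p| := by rw [abs_sub_comm]; ring_nf
        _ ≤ ‖u - v‖ := this
    calc |Real.exp (-(u p)) - Real.exp (-(v p))|
        ≤ Real.exp (max (-(u p)) (-(v p))) * |(-(u p)) - (-(v p))| := h1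
      _ ≤ M * ‖u - v‖ := by
          apply mul_le_mul h2 h3 (abs_nonneg _)
          exact le_trans (Real.exp_pos _).le hu
  have hsub : Fu xs h u x - Fu xs h v x
      = ∫ z in (0:ℝ)..x,
          (Real.exp (-(u (projIcc 0 xs h z))) - Real.exp (-(v (projIcc 0 xs h z)))) := by
    unfold Fu
    rw [intervalIntegral.integral_sub (gu_ii xs h u 0 x) (gu_ii xs h v 0 x)]
  rw [hsub]
  have := intervalIntegral.norm_integral_le_of_norm_le_const
    (C := M * ‖u - v‖)
    (f := fun z => Real.exp (-(u (projIcc 0 xs h z))) - Real.exp (-(v (projIcc 0 xs h z))))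
    (a := 0) (b := x) (fun z _ => by rw [Real.norm_eq_abs]; exact hptwise z)
  rw [Real.norm_eq_abs] at this
  calc |∫ z in (0:ℝ)..x, (Real.exp (-(u (projIcc 0 xs h z))) - Real.exp (-(v (projIcc 0 xs h z))))|
      ≤ M * ‖u - v‖ * |x - 0| := this
    _ = x * (M * ‖u - v‖) := by rw [sub_zero, abs_of_nonneg hx]; ring

lemma Wu_sub_le (M : ℝ) (hu : Real.exp ‖u‖ ≤ M) (hv : Real.exp ‖v‖ ≤ M)
    (x : ℝ) (hx : x ∈ Icc 0 xs) :
    |Wu xs h u x - Wu xs h v x| ≤ xs ^ 2 * M * ‖u - v‖ := by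
  have hsub : Wu xs h u x - Wu xs h v x
      = ∫ ξ in (0:ℝ)..x, (Fu xs h u ξ - Fu xs h v ξ) := by
    unfold Wu
    rw [intervalIntegral.integral_sub (Fu_ii xs h u 0 x) (Fu_ii xs h v 0 x)]
  have hpt : ∀ ξ ∈ Set.uIoc (0:ℝ) x, ‖Fu xs h u ξ - Fu xs h v ξ‖ ≤ xs * (M * ‖u - v‖) := by
    intro ξ hξ
    rw [uIoc_of_le hx.1] at hξ
    rw [Real.norm_eq_abs]
    calc |Fu xs h u ξ - Fu xs h v ξ| ≤ ξ * (M * ‖u - v‖) :=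
          Fu_sub_le xs h u v M hu hv ξ hξ.1.le
      _ ≤ xs * (M * ‖u - v‖) := by
          apply mul_le_mul_of_nonneg_right (le_trans hξ.2 hx.2)
          have : (0:ℝ) < M := lt_of_lt_of_le (Real.exp_pos _) hu
          positivity
  rw [hsub]
  have := intervalIntegral.norm_integral_le_of_norm_le_const hpt
  rw [Real.norm_eq_abs] at this
  calc |∫ ξ in (0:ℝ)..x, (Fu xs h u ξ - Fu xs h v ξ)|
      ≤ xs * (M * ‖u - v‖) * |x - 0| := this
    _ ≤ xs ^ 2 * M * ‖u - v‖ := by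
        rw [sub_zero, abs_of_nonneg hx.1]
        have hM : (0:ℝ) < M := lt_of_lt_of_le (Real.exp_pos _) hu
        nlinarith [mul_le_mul_of_nonneg_left hx.2 (mul_nonneg (mul_nonneg h hM.le) (norm_nonneg (u-v)))]

end aux

/-- Key one-sided estimate. -/
lemma key_est (xs : ℝ) (hxs : 0 < xs) (t₁ : ℝ) (ht₁ : 0 < t₁)
    (u v : C(Icc (0:ℝ) xs, ℝ)) (t a b : ℝ) (hta : t₁ ≤ t)
    (ha : a ∈ Icc 0 xs) (hb : b ∈ Icc 0 xs)
    (hWa : Wu xs hxs.le u a = t) (hWb : Wu xs hxs.le v b = t) (hba : b ≤ a) :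
    a - b ≤
      Real.exp (xs ^ 4 * Real.exp (max ‖u‖ ‖v‖) ^ 6 / t₁ ^ 2) *
        (xs ^ 5 * Real.exp (max ‖u‖ ‖v‖) ^ 6 / t₁ ^ 2) * ‖u - v‖ := by
  set M := Real.exp (max ‖u‖ ‖v‖) with hMdef
  have hM1 : 1 ≤ M := Real.one_le_exp (le_trans (norm_nonneg u) (le_max_left _ _))
  have hMpos : (0:ℝ) < M := lt_of_lt_of_le one_pos hM1
  have hexpu : Real.exp ‖u‖ ≤ M := Real.exp_le_exp.mpr (le_max_left _ _)
  have hexpv : Real.exp ‖v‖ ≤ M := Real.exp_le_exp.mpr (le_max_right _ _)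
  have hD : (0:ℝ) ≤ ‖u - v‖ := norm_nonneg _
  set D := ‖u - v‖ with hDdef
  have hab : 0 ≤ a - b := by linarith
  -- lower bound for b : t₁ ≤ b * (xs * M)
  have ht₁b : t₁ ≤ b * (xs * M) := by
    have h1 : Wu xs hxs.le v b ≤ b * Fu xs hxs.le v b := Wu_le_mul xs hxs.le v b hb.1
    have h2 : Fu xs hxs.le v b ≤ b * Real.exp ‖v‖ := Fu_le xs hxs.le v b hb.1
    have h3 : b * Real.exp ‖v‖ ≤ xs * M :=
      mul_le_mul hb.2 hexpv (Real.exp_pos _).le hxs.le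
    nlinarith [hb.1]
  -- upper bound for t₁ : t₁ ≤ xs^2 * M^3
  have ht₁xs : t₁ ≤ xs ^ 2 * M ^ 3 := by
    have h1 : Wu xs hxs.le u a ≤ a * Fu xs hxs.le u a := Wu_le_mul xs hxs.le u a ha.1
    have h2 : Fu xs hxs.le u a ≤ a * Real.exp ‖u‖ := Fu_le xs hxs.le u a ha.1
    have h4 : a * (a * Real.exp ‖u‖) ≤ xs * (xs * M) := by
      apply mul_le_mul ha.2 _ (mul_nonneg ha.1 (Real.exp_pos _).le) hxs.le
      exact mul_le_mul ha.2 hexpu (Real.exp_pos _).le hxs.le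
    have hM3 : M ≤ M ^ 3 := le_self_pow₀ hM1 (by norm_num)
    have h5 : xs * (xs * M) ≤ xs ^ 2 * M ^ 3 := by
      nlinarith [mul_le_mul_of_nonneg_left hM3 (sq_nonneg xs)]
    have h6 := mul_le_mul_of_nonneg_left h2 ha.1
    rw [hWa] at h1
    linarith
  -- main integral estimate
  have hI : (a - b) * Fu xs hxs.le u b ≤ xs ^ 2 * M * D := by
    have h1 : (a - b) * Fu xs hxs.le u b ≤ Wu xs hxs.le u a - Wu xs hxs.le u b :=
      Wu_diff_ge xs hxs.le u a b hba
    have h2 : Wu xs hxs.le u a - Wu xs hxs.le u b = Wu xs hxs.le v b - Wu xs hxs.le u b := by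
      rw [hWa, hWb]
    have h3 : |Wu xs hxs.le v b - Wu xs hxs.le u b| ≤ xs ^ 2 * M * ‖v - u‖ :=
      Wu_sub_le xs hxs.le v u M hexpv hexpu b hb
    rw [norm_sub_rev] at h3
    have := (abs_le.mp h3).2
    linarith
  -- lower bound for Fu u b
  have hFb : b * M⁻¹ ≤ Fu xs hxs.le u b := by
    have h1 : b * Real.exp (-‖u‖) ≤ Fu xs hxs.le u b := Fu_ge xs hxs.le u b hb.1
    have h2 : M⁻¹ ≤ Real.exp (-‖u‖) := by
      rw [hMdef, ← Real.exp_neg]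
      exact Real.exp_le_exp.mpr (neg_le_neg (le_max_left _ _))
    nlinarith [hb.1]
  -- combine : (a-b) * b ≤ xs^2 * M^2 * D
  have h3 : (a - b) * b ≤ xs ^ 2 * M ^ 2 * D := by
    have h2 : (a - b) * (b * M⁻¹) ≤ xs ^ 2 * M * D :=
      le_trans (mul_le_mul_of_nonneg_left hFb hab) hI
    have heq : (a - b) * b = ((a - b) * (b * M⁻¹)) * M := by
      field_simp
    rw [heq]
    calc ((a - b) * (b * M⁻¹)) * M ≤ (xs ^ 2 * M * D) * M :=
          mul_le_mul_of_nonneg_right h2 hMpos.le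
      _ = xs ^ 2 * M ^ 2 * D := by ring
  -- (a-b) * t₁ ≤ xs^3 * M^3 * D
  have hq : (a - b) * t₁ ≤ xs ^ 3 * M ^ 3 * D := by
    have h4 : (a - b) * t₁ ≤ (a - b) * (b * (xs * M)) :=
      mul_le_mul_of_nonneg_left ht₁b hab
    have h5 : (a - b) * (b * (xs * M)) = ((a - b) * b) * (xs * M) := by ring
    have h6 : ((a - b) * b) * (xs * M) ≤ (xs ^ 2 * M ^ 2 * D) * (xs * M) :=
      mul_le_mul_of_nonneg_right h3 (by positivity)
    nlinarith
  -- step1 : (a-b) * t₁^2 ≤ xs^5 * M^6 * D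
  have step1 : (a - b) * t₁ ^ 2 ≤ xs ^ 5 * M ^ 6 * D := by
    have s1 : (a - b) * t₁ * t₁ ≤ xs ^ 3 * M ^ 3 * D * t₁ :=
      mul_le_mul_of_nonneg_right hq ht₁.le
    have s2 : xs ^ 3 * M ^ 3 * D * t₁ ≤ xs ^ 3 * M ^ 3 * D * (xs ^ 2 * M ^ 3) :=
      mul_le_mul_of_nonneg_left ht₁xs (by positivity)
    nlinarith
  have step2 : a - b ≤ xs ^ 5 * M ^ 6 / t₁ ^ 2 * D := by
    rw [div_mul_eq_mul_div, le_div_iff₀ (by positivity)]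
    nlinarith [step1]
  have hE : (1:ℝ) ≤ Real.exp (xs ^ 4 * M ^ 6 / t₁ ^ 2) :=
    Real.one_le_exp (by positivity)
  calc a - b ≤ xs ^ 5 * M ^ 6 / t₁ ^ 2 * D := step2
    _ ≤ Real.exp (xs ^ 4 * M ^ 6 / t₁ ^ 2) * (xs ^ 5 * M ^ 6 / t₁ ^ 2) * D := by
        nlinarith [mul_nonneg (by positivity : (0:ℝ) ≤ xs ^ 5 * M ^ 6 / t₁ ^ 2) hD]

/-- Lemma 2, front estimate: for `t ∈ [t₁, min(τ*_u, τ*_v)]`,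
`|Υ^u(t) - Υ^v(t)| ≤ C_{u,v}·‖u - v‖` where
`C_{u,v} = exp((x*)⁴·M⁶/t₁²)·(x*)⁵·M⁶/t₁²` and `M = exp(max(‖u‖,‖v‖))`. -/
theorem stmt_11 (xs : ℝ) (hxs : 0 < xs) (t₁ : ℝ) (ht₁ : 0 < t₁)
    (u v : C(Icc (0:ℝ) xs, ℝ)) (Υu Υv : ℝ → ℝ)
    (hΥu : ∀ s ∈ Icc (0:ℝ) (tau xs hxs.le u), Υu s ∈ Icc 0 xs ∧ Wu xs hxs.le u (Υu s) = s)
    (hΥv : ∀ s ∈ Icc (0:ℝ) (tau xs hxs.le v), Υv s ∈ Icc 0 xs ∧ Wu xs hxs.le v (Υv s) = s)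
    (t : ℝ) (ht : t ∈ Icc t₁ (min (tau xs hxs.le u) (tau xs hxs.le v))) :
    |Υu t - Υv t| ≤
      Real.exp (xs ^ 4 * Real.exp (max ‖u‖ ‖v‖) ^ 6 / t₁ ^ 2) *
        (xs ^ 5 * Real.exp (max ‖u‖ ‖v‖) ^ 6 / t₁ ^ 2) * ‖u - v‖ := by
  obtain ⟨ht1, ht2⟩ := ht
  have htu : t ≤ tau xs hxs.le u := le_trans ht2 (min_le_left _ _)
  have htv : t ≤ tau xs hxs.le v := le_trans ht2 (min_le_right _ _)
  have ht0 : (0:ℝ) ≤ t := le_trans ht₁.le ht1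
  obtain ⟨ha, hWa⟩ := hΥu t ⟨ht0, htu⟩
  obtain ⟨hb, hWb⟩ := hΥv t ⟨ht0, htv⟩
  rcases le_total (Υv t) (Υu t) with hc | hc
  · rw [abs_of_nonneg (by linarith)]
    exact key_est xs hxs t₁ ht₁ u v t (Υu t) (Υv t) ht1 ha hb hWa hWb hc
  · rw [abs_of_nonpos (by linarith)]
    have := key_est xs hxs t₁ ht₁ v u t (Υv t) (Υu t) ht1 hb ha hWb hWa hc
    rw [max_comm, norm_sub_rev] at this
    linarith
end

section
/- (Theorem 1, front component.) Fix x* > 0 and a fixed observation time t > 0. Then the map u ↦ Υ^u(min(t, τ*_u)), from the space C([0,x*], ℝ) of continuous real-valued functions on [0,x*] equipped with the supremum metric to ℝ, is continuous. -/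
open Set

/-- The moving front `Υ^u = W_u⁻¹`: since `W_u` is continuous and strictly increasing
on `[0,x*]`, for `t ∈ [0,τ*_u]` the set below is a singleton and `front` is its element. -/
noncomputable def front (xs : ℝ) (h : 0 ≤ xs) (u : C(Icc (0:ℝ) xs, ℝ)) (t : ℝ) : ℝ :=
  sInf {x : ℝ | x ∈ Icc 0 xs ∧ Wu xs h u x = t}

open Filter Topology MeasureTheory

section Aux

variable (xs : ℝ) (h : 0 ≤ xs)

lemma contg (u : C(Icc (0:ℝ) xs, ℝ)) :
    Continuous fun z : ℝ => Real.exp (-(u (projIcc 0 xs h z))) :=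
  Real.continuous_exp.comp (u.continuous.comp continuous_projIcc).neg

lemma Fu_continuous (u : C(Icc (0:ℝ) xs, ℝ)) : Continuous (Fu xs h u) :=
  intervalIntegral.continuous_primitive
    (fun a b => (contg xs h u).intervalIntegrable a b) 0

lemma Wu_continuous (u : C(Icc (0:ℝ) xs, ℝ)) : Continuous (Wu xs h u) :=
  intervalIntegral.continuous_primitive
    (fun a b => (Fu_continuous xs h u).intervalIntegrable a b) 0

lemma Fu_pos (u : C(Icc (0:ℝ) xs, ℝ)) {x : ℝ} (hx : 0 < x) : 0 < Fu xs h u x :=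
  intervalIntegral.intervalIntegral_pos_of_pos
    ((contg xs h u).intervalIntegrable 0 x) (fun _ => Real.exp_pos _) hx

lemma Wu_zero (u : C(Icc (0:ℝ) xs, ℝ)) : Wu xs h u 0 = 0 :=
  intervalIntegral.integral_same

lemma Wu_sub (u : C(Icc (0:ℝ) xs, ℝ)) (a b : ℝ) :
    Wu xs h u b - Wu xs h u a = ∫ ξ in a..b, Fu xs h u ξ := by
  have := intervalIntegral.integral_add_adjacent_intervals (μ := volume)
    ((Fu_continuous xs h u).intervalIntegrable 0 a)
    ((Fu_continuous xs h u).intervalIntegrable a b)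
  unfold Wu; linarith

lemma Wu_strictMonoOn (u : C(Icc (0:ℝ) xs, ℝ)) : StrictMonoOn (Wu xs h u) (Ici 0) := by
  intro a ha b _ hab
  have hpos : 0 < ∫ ξ in a..b, Fu xs h u ξ := by
    apply intervalIntegral.intervalIntegral_pos_of_pos_on
      ((Fu_continuous xs h u).intervalIntegrable a b)
      (fun x hx => Fu_pos xs h u (lt_of_le_of_lt ha hx.1)) hab
  have := Wu_sub xs h u a b
  linarith

lemma tau_pos (hxs : 0 < xs) (u : C(Icc (0:ℝ) xs, ℝ)) : 0 < tau xs h u := by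
  have := Wu_strictMonoOn xs h u (mem_Ici.2 le_rfl) (le_of_lt hxs) hxs
  rw [Wu_zero] at this
  exact this

/-- Characterization of `front` for `s ∈ [0, τ]`. -/
lemma front_spec (u : C(Icc (0:ℝ) xs, ℝ)) {s : ℝ} (hs0 : 0 ≤ s) (hs : s ≤ tau xs h u) :
    front xs h u s ∈ Icc 0 xs ∧ Wu xs h u (front xs h u s) = s := by
  obtain ⟨x, hx, hWx⟩ : ∃ x ∈ Icc 0 xs, Wu xs h u x = s := by
    have hsub := intermediate_value_Icc h (Wu_continuous xs h u).continuousOn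
    have : s ∈ Icc (Wu xs h u 0) (Wu xs h u xs) := by
      rw [Wu_zero]; exact ⟨hs0, hs⟩
    exact hsub this
  have hset : {y : ℝ | y ∈ Icc 0 xs ∧ Wu xs h u y = s} = {x} := by
    ext y
    simp only [mem_setOf_eq, mem_singleton_iff]
    constructor
    · rintro ⟨hy, hWy⟩
      exact (Wu_strictMonoOn xs h u).injOn hy.1 hx.1 (by rw [hWy, hWx])
    · rintro rfl; exact ⟨hx, hWx⟩
  rw [front, hset, csInf_singleton]
  exact ⟨hx, hWx⟩

lemma exp_lip {a b R : ℝ} (ha : a ≤ R) (hb : b ≤ R) :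
    |Real.exp a - Real.exp b| ≤ Real.exp R * |a - b| := by
  wlog hab : b ≤ a generalizing a b
  · rw [abs_sub_comm, abs_sub_comm a b]; exact this hb ha (le_of_not_ge hab)
  rw [abs_of_nonneg (sub_nonneg.2 (Real.exp_le_exp.2 hab)),
    abs_of_nonneg (sub_nonneg.2 hab)]
  have h1 : Real.exp a - Real.exp b ≤ Real.exp a * (a - b) := by
    have h2 : (b - a) + 1 ≤ Real.exp (b - a) := Real.add_one_le_exp _
    have h3 : Real.exp a * Real.exp (b - a) = Real.exp b := by
      rw [← Real.exp_add]; ring_nf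
    nlinarith [Real.exp_pos a]
  have h4 : Real.exp a * (a - b) ≤ Real.exp R * (a - b) :=
    mul_le_mul_of_nonneg_right (Real.exp_le_exp.2 ha) (sub_nonneg.2 hab)
  linarith

lemma g_dist (u v : C(Icc (0:ℝ) xs, ℝ)) (z : ℝ) :
    |Real.exp (-(u (projIcc 0 xs h z))) - Real.exp (-(v (projIcc 0 xs h z)))| ≤
      Real.exp (max ‖u‖ ‖v‖) * dist u v := by
  set p := projIcc 0 xs h z
  have h1 : -(u p) ≤ max ‖u‖ ‖v‖ := by
    have h2 : |u p| ≤ ‖u‖ := u.norm_coe_le_norm p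
    have := (abs_le.1 h2).1
    linarith [le_max_left ‖u‖ ‖v‖]
  have h2 : -(v p) ≤ max ‖u‖ ‖v‖ := by
    have h2 : |v p| ≤ ‖v‖ := v.norm_coe_le_norm p
    have := (abs_le.1 h2).1
    linarith [le_max_right ‖u‖ ‖v‖]
  calc |Real.exp (-(u p)) - Real.exp (-(v p))|
      ≤ Real.exp (max ‖u‖ ‖v‖) * |(-(u p)) - (-(v p))| := exp_lip h1 h2
    _ ≤ Real.exp (max ‖u‖ ‖v‖) * dist u v := by
        apply mul_le_mul_of_nonneg_left _ (Real.exp_pos _).le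
        have : |(-(u p)) - (-(v p))| = dist (u p) (v p) := by
          rw [Real.dist_eq, abs_sub_comm]
          congr 1
          ring
        rw [this]
        exact ContinuousMap.dist_apply_le_dist p

lemma Fu_dist (u v : C(Icc (0:ℝ) xs, ℝ)) {x : ℝ} (hx : x ∈ Icc 0 xs) :
    |Fu xs h u x - Fu xs h v x| ≤ Real.exp (max ‖u‖ ‖v‖) * dist u v * xs := by
  have hint : Fu xs h u x - Fu xs h v x = ∫ z in (0:ℝ)..x,
      (Real.exp (-(u (projIcc 0 xs h z))) - Real.exp (-(v (projIcc 0 xs h z)))) := by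
    rw [intervalIntegral.integral_sub ((contg xs h u).intervalIntegrable 0 x)
      ((contg xs h v).intervalIntegrable 0 x)]
    rfl
  rw [hint]
  have := intervalIntegral.norm_integral_le_of_norm_le_const (a := (0:ℝ)) (b := x)
    (C := Real.exp (max ‖u‖ ‖v‖) * dist u v)
    (f := fun z => Real.exp (-(u (projIcc 0 xs h z))) - Real.exp (-(v (projIcc 0 xs h z))))
    (fun z _ => by simpa using g_dist xs h u v z)
  rw [Real.norm_eq_abs] at this
  refine this.trans ?_
  have hxabs : |x - 0| ≤ xs := by
    rw [sub_zero, abs_of_nonneg hx.1]; exact hx.2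
  exact mul_le_mul_of_nonneg_left hxabs
    (mul_nonneg (Real.exp_pos _).le dist_nonneg)

lemma Wu_dist (u v : C(Icc (0:ℝ) xs, ℝ)) {x : ℝ} (hx : x ∈ Icc 0 xs) :
    |Wu xs h u x - Wu xs h v x| ≤ Real.exp (max ‖u‖ ‖v‖) * dist u v * xs * xs := by
  have hint : Wu xs h u x - Wu xs h v x = ∫ ξ in (0:ℝ)..x,
      (Fu xs h u ξ - Fu xs h v ξ) := by
    rw [intervalIntegral.integral_sub ((Fu_continuous xs h u).intervalIntegrable 0 x)
      ((Fu_continuous xs h v).intervalIntegrable 0 x)]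
    rfl
  rw [hint]
  have hb : ∀ ξ ∈ Set.uIoc (0:ℝ) x, ‖Fu xs h u ξ - Fu xs h v ξ‖ ≤
      Real.exp (max ‖u‖ ‖v‖) * dist u v * xs := by
    intro ξ hξ
    rw [Set.uIoc_of_le hx.1] at hξ
    exact (Real.norm_eq_abs _ ▸ Fu_dist xs h u v ⟨hξ.1.le, hξ.2.trans hx.2⟩)
  have := intervalIntegral.norm_integral_le_of_norm_le_const hb
  rw [Real.norm_eq_abs] at this
  refine this.trans ?_
  have hxabs : |x - 0| ≤ xs := by
    rw [sub_zero, abs_of_nonneg hx.1]; exact hx.2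
  exact mul_le_mul_of_nonneg_left hxabs
    (mul_nonneg (mul_nonneg (Real.exp_pos _).le dist_nonneg) h)

/-- If `U n → u₀` and `x n → y` with `x n ∈ [0, xs]`, then `Wu (U n) (x n) → Wu u₀ y`. -/
lemma Wu_tendsto {U : ℕ → C(Icc (0:ℝ) xs, ℝ)} {u₀ : C(Icc (0:ℝ) xs, ℝ)}
    (hU : Tendsto U atTop (𝓝 u₀)) {x : ℕ → ℝ} {y : ℝ} (hx : ∀ n, x n ∈ Icc 0 xs)
    (hxy : Tendsto x atTop (𝓝 y)) :
    Tendsto (fun n => Wu xs h (U n) (x n)) atTop (𝓝 (Wu xs h u₀ y)) := by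
  have h1 : Tendsto (fun n => Wu xs h u₀ (x n)) atTop (𝓝 (Wu xs h u₀ y)) :=
    ((Wu_continuous xs h u₀).tendsto y).comp hxy
  have h2 : Tendsto (fun n => Wu xs h (U n) (x n) - Wu xs h u₀ (x n)) atTop (𝓝 0) := by
    apply squeeze_zero_norm' (a := fun n => Real.exp (‖u₀‖ + 1) * dist (U n) u₀ * xs * xs)
    · have hev : ∀ᶠ n in atTop, dist (U n) u₀ ≤ 1 := by
        have := (tendsto_iff_dist_tendsto_zero.1 hU).eventually (ge_mem_nhds one_pos)
        simpa using this
      filter_upwards [hev] with n hn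
      have hR : max ‖U n‖ ‖u₀‖ ≤ ‖u₀‖ + 1 := by
        have : ‖U n‖ ≤ ‖u₀‖ + 1 := by
          have := norm_sub_norm_le (U n) u₀
          rw [← dist_eq_norm] at this
          linarith
        have h0 : ‖u₀‖ ≤ ‖u₀‖ + 1 := by linarith
        exact max_le this h0
      have := Wu_dist xs h (U n) u₀ (hx n)
      rw [Real.norm_eq_abs]
      refine this.trans ?_
      have hmono : Real.exp (max ‖U n‖ ‖u₀‖) ≤ Real.exp (‖u₀‖ + 1) :=
        Real.exp_le_exp.2 hR
      have hd : (0:ℝ) ≤ dist (U n) u₀ := dist_nonneg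
      have := mul_le_mul_of_nonneg_right
        (mul_le_mul_of_nonneg_right (mul_le_mul_of_nonneg_right hmono hd) h) h
      linarith
    · have : Tendsto (fun n => dist (U n) u₀) atTop (𝓝 0) :=
        tendsto_iff_dist_tendsto_zero.1 hU
      have := ((this.const_mul (Real.exp (‖u₀‖ + 1))).mul_const xs).mul_const xs
      simpa using this
  have := h2.add h1
  simpa using this

end Aux

/-- Theorem 1, front component: for a fixed observation time `t > 0`,
the map `u ↦ Υ^u(min(t, τ*_u))` is continuous on `C([0,x*], ℝ)` with the sup metric. -/
theorem stmt_15 (xs : ℝ) (hxs : 0 < xs) (t : ℝ) (ht : 0 < t) :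
    Continuous fun u : C(Icc (0:ℝ) xs, ℝ) =>
      front xs hxs.le u (min t (tau xs hxs.le u)) := by
  rw [continuous_iff_seqContinuous]
  intro U u₀ hU
  set h := hxs.le
  -- the observation times
  set s : C(Icc (0:ℝ) xs, ℝ) → ℝ := fun u => min t (tau xs h u) with hs_def
  have hs0 : ∀ u, 0 ≤ s u := fun u => le_min ht.le (tau_pos xs h hxs u).le
  have hsτ : ∀ u, s u ≤ tau xs h u := fun u => min_le_right _ _
  have hspec : ∀ u, front xs h u (s u) ∈ Icc 0 xs ∧ Wu xs h u (front xs h u (s u)) = s u :=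
    fun u => front_spec xs h u (hs0 u) (hsτ u)
  -- convergence of the observation times
  have hτ : Tendsto (fun n => tau xs h (U n)) atTop (𝓝 (tau xs h u₀)) := by
    have : Tendsto (fun n => Wu xs h (U n) xs) atTop (𝓝 (Wu xs h u₀ xs)) :=
      Wu_tendsto xs h hU (fun _ => ⟨h, le_rfl⟩) tendsto_const_nhds
    exact this
  have hsU : Tendsto (fun n => s (U n)) atTop (𝓝 (s u₀)) :=
    tendsto_const_nhds.min hτ
  -- the fronts
  set x : ℕ → ℝ := fun n => front xs h (U n) (s (U n)) with hx_def
  set x₀ : ℝ := front xs h u₀ (s u₀) with hx0_def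
  show Tendsto x atTop (𝓝 x₀)
  apply tendsto_of_subseq_tendsto
  intro ns hns
  obtain ⟨y, hy, φ, hφ, hyφ⟩ := (isCompact_Icc (a := (0:ℝ)) (b := xs)).tendsto_subseq
    (fun k => (hspec (U (ns k))).1)
  refine ⟨φ, ?_⟩
  -- along the subsequence m := ns ∘ φ
  set m : ℕ → ℕ := fun k => ns (φ k) with hm_def
  have hm : Tendsto m atTop atTop := hns.comp hφ.tendsto_atTop
  have hUm : Tendsto (fun k => U (m k)) atTop (𝓝 u₀) := hU.comp hm
  have hxm : Tendsto (fun k => x (m k)) atTop (𝓝 y) := hyφ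
  have hW : Tendsto (fun k => Wu xs h (U (m k)) (x (m k))) atTop (𝓝 (Wu xs h u₀ y)) :=
    Wu_tendsto xs h hUm (fun k => (hspec (U (m k))).1) hxm
  have hW' : Tendsto (fun k => Wu xs h (U (m k)) (x (m k))) atTop (𝓝 (s u₀)) := by
    have : (fun k => Wu xs h (U (m k)) (x (m k))) = fun k => s (U (m k)) := by
      funext k; exact (hspec (U (m k))).2
    rw [this]
    exact hsU.comp hm
  have hWy : Wu xs h u₀ y = s u₀ := tendsto_nhds_unique hW hW'
  have hy_eq : y = x₀ := by
    apply (Wu_strictMonoOn xs h u₀).injOn hy.1 (hspec u₀).1.1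
    rw [hWy, (hspec u₀).2]
  rw [hy_eq] at hxm
  exact hxm
end

section
/- (Lipschitz continuity of the clamped front forward map.) Fix x* > 0 and t₁ > 0, and let u, v : [0,x*] → ℝ be continuous with t₁ ≤ min(τ*_u, τ*_v). Then for every t ≥ t₁, |Υ^u(min(t, τ*_u)) − Υ^v(min(t, τ*_v))| ≤ ( C_{u,v} + (1/2)·(x*)²·M_{u,v}·max(A_u, A_v) )·‖u − v‖, where M_{u,v} = exp(max(‖u‖,‖v‖)), A_u = (x*/t₁)·exp(2‖u‖), and C_{u,v} = exp((x*)⁴·M_{u,v}⁶/t₁²)·(x*)⁵·M_{u,v}⁶/t₁². -/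
open Set

/- auxiliary lemmas -/

lemma exp_integrand_cont (xs : ℝ) (h : 0 ≤ xs) (u : C(Icc (0:ℝ) xs, ℝ)) :
    Continuous fun z : ℝ => Real.exp (-(u (projIcc 0 xs h z))) :=
  Real.continuous_exp.comp ((u.continuous.comp continuous_projIcc).neg)

lemma Fu_cont (xs : ℝ) (h : 0 ≤ xs) (u : C(Icc (0:ℝ) xs, ℝ)) :
    Continuous (Fu xs h u) :=
  intervalIntegral.continuous_primitive
    (fun a b => (exp_integrand_cont xs h u).intervalIntegrable a b) 0

lemma Fu_le_mul (xs : ℝ) (h : 0 ≤ xs) (u : C(Icc (0:ℝ) xs, ℝ)) (M : ℝ)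
    (hub : ∀ z : ℝ, Real.exp (-(u (projIcc 0 xs h z))) ≤ M)
    {x : ℝ} (hx : 0 ≤ x) : Fu xs h u x ≤ x * M := by
  have := intervalIntegral.integral_mono_on (μ := MeasureTheory.volume) hx
      ((exp_integrand_cont xs h u).intervalIntegrable 0 x)
      (intervalIntegrable_const) (fun z _ => hub z)
  simpa [Fu, smul_eq_mul] using this

lemma mul_le_Fu (xs : ℝ) (h : 0 ≤ xs) (u : C(Icc (0:ℝ) xs, ℝ)) (m : ℝ)
    (hlb : ∀ z : ℝ, m ≤ Real.exp (-(u (projIcc 0 xs h z))))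
    {x : ℝ} (hx : 0 ≤ x) : x * m ≤ Fu xs h u x := by
  have := intervalIntegral.integral_mono_on (μ := MeasureTheory.volume) hx
      (intervalIntegrable_const)
      ((exp_integrand_cont xs h u).intervalIntegrable 0 x) (fun z _ => hlb z)
  simpa [Fu, smul_eq_mul] using this

lemma Wu_le (xs : ℝ) (h : 0 ≤ xs) (u : C(Icc (0:ℝ) xs, ℝ)) (M : ℝ)
    (hub : ∀ z : ℝ, Real.exp (-(u (projIcc 0 xs h z))) ≤ M)
    {x : ℝ} (hx : 0 ≤ x) : Wu xs h u x ≤ x ^ 2 * M / 2 := by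
  have hmono := intervalIntegral.integral_mono_on (μ := MeasureTheory.volume) hx
      ((Fu_cont xs h u).intervalIntegrable 0 x)
      ((continuous_id.mul continuous_const).intervalIntegrable 0 x)
      (fun ξ hξ => Fu_le_mul xs h u M hub hξ.1)
  have hcalc : (∫ ξ in (0:ℝ)..x, ξ * M) = x ^ 2 * M / 2 := by
    rw [intervalIntegral.integral_mul_const, integral_id]
    ring
  calc Wu xs h u x ≤ ∫ ξ in (0:ℝ)..x, ξ * M := hmono
    _ = x ^ 2 * M / 2 := hcalc

lemma Wu_diff_lower (xs : ℝ) (h : 0 ≤ xs) (u : C(Icc (0:ℝ) xs, ℝ)) (m : ℝ)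
    (hlb : ∀ z : ℝ, m ≤ Real.exp (-(u (projIcc 0 xs h z))))
    {p q : ℝ} (hp : 0 ≤ p) (hpq : p ≤ q) :
    (q ^ 2 - p ^ 2) * m / 2 ≤ Wu xs h u q - Wu xs h u p := by
  have hsub : Wu xs h u q - Wu xs h u p = ∫ ξ in p..q, Fu xs h u ξ :=
    intervalIntegral.integral_interval_sub_left
      ((Fu_cont xs h u).intervalIntegrable 0 q) ((Fu_cont xs h u).intervalIntegrable 0 p)
  have hmono := intervalIntegral.integral_mono_on (μ := MeasureTheory.volume) hpq
      ((continuous_id.mul continuous_const).intervalIntegrable p q)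
      ((Fu_cont xs h u).intervalIntegrable p q)
      (fun ξ hξ => mul_le_Fu xs h u m hlb (hp.trans hξ.1))
  have hcalc : (∫ ξ in p..q, ξ * m) = (q ^ 2 - p ^ 2) * m / 2 := by
    rw [intervalIntegral.integral_mul_const, integral_id]
    ring
  rw [hsub]
  calc (q ^ 2 - p ^ 2) * m / 2 = ∫ ξ in p..q, ξ * m := hcalc.symm
    _ ≤ ∫ ξ in p..q, Fu xs h u ξ := hmono

lemma Wu_diff_bound (xs : ℝ) (h : 0 ≤ xs) (u v : C(Icc (0:ℝ) xs, ℝ)) (K : ℝ) (hK : 0 ≤ K)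
    (hpt : ∀ z : ℝ,
      |Real.exp (-(u (projIcc 0 xs h z))) - Real.exp (-(v (projIcc 0 xs h z)))| ≤ K)
    {x : ℝ} (hx : 0 ≤ x) : |Wu xs h u x - Wu xs h v x| ≤ x ^ 2 / 2 * K := by
  have hFd : ∀ ξ : ℝ, 0 ≤ ξ → |Fu xs h u ξ - Fu xs h v ξ| ≤ ξ * K := by
    intro ξ hξ
    have hsub : Fu xs h u ξ - Fu xs h v ξ =
        ∫ z in (0:ℝ)..ξ,
          (Real.exp (-(u (projIcc 0 xs h z))) - Real.exp (-(v (projIcc 0 xs h z)))) := by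
      rw [intervalIntegral.integral_sub ((exp_integrand_cont xs h u).intervalIntegrable 0 ξ)
        ((exp_integrand_cont xs h v).intervalIntegrable 0 ξ)]
      rfl
    rw [hsub]
    have := intervalIntegral.norm_integral_le_of_norm_le_const (a := (0:ℝ)) (b := ξ) (C := K)
      (f := fun z => Real.exp (-(u (projIcc 0 xs h z))) - Real.exp (-(v (projIcc 0 xs h z))))
      (fun z _ => by simpa [Real.norm_eq_abs] using hpt z)
    rw [Real.norm_eq_abs] at this
    calc |∫ z in (0:ℝ)..ξ, (Real.exp (-(u (projIcc 0 xs h z))) -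
            Real.exp (-(v (projIcc 0 xs h z))))| ≤ K * |ξ - 0| := this
      _ = ξ * K := by rw [sub_zero, abs_of_nonneg hξ]; ring
  have hFcont : Continuous fun ξ => Fu xs h u ξ - Fu xs h v ξ :=
    (Fu_cont xs h u).sub (Fu_cont xs h v)
  have hWsub : Wu xs h u x - Wu xs h v x = ∫ ξ in (0:ℝ)..x, (Fu xs h u ξ - Fu xs h v ξ) := by
    rw [intervalIntegral.integral_sub ((Fu_cont xs h u).intervalIntegrable 0 x)
      ((Fu_cont xs h v).intervalIntegrable 0 x)]
    rfl
  rw [hWsub]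
  calc |∫ ξ in (0:ℝ)..x, (Fu xs h u ξ - Fu xs h v ξ)|
      ≤ ∫ ξ in (0:ℝ)..x, |Fu xs h u ξ - Fu xs h v ξ| :=
        intervalIntegral.abs_integral_le_integral_abs hx
    _ ≤ ∫ ξ in (0:ℝ)..x, ξ * K := by
        refine intervalIntegral.integral_mono_on hx (hFcont.abs.intervalIntegrable 0 x)
          ((continuous_id.mul continuous_const).intervalIntegrable 0 x)
          (fun ξ hξ => hFd ξ hξ.1)
    _ = x ^ 2 / 2 * K := by rw [intervalIntegral.integral_mul_const, integral_id]; ring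

lemma exp_lip_s19 {r s B : ℝ} (hr : r ≤ B) (hs : s ≤ B) :
    |Real.exp r - Real.exp s| ≤ Real.exp B * |r - s| := by
  wlog hrs : s ≤ r generalizing r s
  · rw [abs_sub_comm, abs_sub_comm r s]
    exact this hs hr (le_of_not_ge hrs)
  rw [abs_of_nonneg (sub_nonneg.2 (Real.exp_le_exp.2 hrs)), abs_of_nonneg (sub_nonneg.2 hrs)]
  have h1 : s - r + 1 ≤ Real.exp (s - r) := Real.add_one_le_exp (s - r)
  have h2 : Real.exp (s - r) * Real.exp r = Real.exp s := by
    rw [← Real.exp_add]; ring_nf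
  have h3 : Real.exp r ≤ Real.exp B := Real.exp_le_exp.2 hr
  nlinarith [Real.exp_pos r, Real.exp_pos B, sub_nonneg.2 hrs]

set_option maxHeartbeats 1000000 in
/-- Lipschitz continuity of the clamped front forward map:
if `t₁ ≤ min(τ*_u, τ*_v)` then for every `t ≥ t₁`,
`|Υ^u(min(t,τ*_u)) - Υ^v(min(t,τ*_v))| ≤ (C_{u,v} + (1/2)·(x*)²·M_{u,v}·max(A_u,A_v))·‖u-v‖`. -/
theorem stmt_19 (xs : ℝ) (hxs : 0 < xs) (t₁ : ℝ) (ht₁ : 0 < t₁)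
    (u v : C(Icc (0:ℝ) xs, ℝ)) (Υu Υv : ℝ → ℝ)
    (hΥu : ∀ s ∈ Icc (0:ℝ) (tau xs hxs.le u), Υu s ∈ Icc 0 xs ∧ Wu xs hxs.le u (Υu s) = s)
    (hΥv : ∀ s ∈ Icc (0:ℝ) (tau xs hxs.le v), Υv s ∈ Icc 0 xs ∧ Wu xs hxs.le v (Υv s) = s)
    (ht₁τ : t₁ ≤ min (tau xs hxs.le u) (tau xs hxs.le v))
    (t : ℝ) (ht : t₁ ≤ t) :
    |Υu (min t (tau xs hxs.le u)) - Υv (min t (tau xs hxs.le v))| ≤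
      (Real.exp (xs ^ 4 * Real.exp (max ‖u‖ ‖v‖) ^ 6 / t₁ ^ 2) *
          (xs ^ 5 * Real.exp (max ‖u‖ ‖v‖) ^ 6 / t₁ ^ 2) +
        1 / 2 * xs ^ 2 * Real.exp (max ‖u‖ ‖v‖) *
          max (xs / t₁ * Real.exp (2 * ‖u‖)) (xs / t₁ * Real.exp (2 * ‖v‖))) *
        ‖u - v‖ := by
  set B := max ‖u‖ ‖v‖ with hBdef
  set M := Real.exp B with hMdef
  set D := ‖u - v‖ with hDdef
  have hB0 : 0 ≤ B := le_trans (norm_nonneg u) (le_max_left _ _)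
  have hM1 : 1 ≤ M := Real.one_le_exp hB0
  have hMpos : 0 < M := lt_of_lt_of_le one_pos hM1
  have hD0 : 0 ≤ D := norm_nonneg _
  -- pointwise bounds on the integrands
  have hub_u : ∀ z : ℝ, Real.exp (-(u (projIcc 0 xs hxs.le z))) ≤ M := by
    intro z
    apply Real.exp_le_exp.2
    have h1 : |u (projIcc 0 xs hxs.le z)| ≤ ‖u‖ := by
      simpa [Real.norm_eq_abs] using u.norm_coe_le_norm (projIcc 0 xs hxs.le z)
    have := abs_le.1 h1
    calc -(u (projIcc 0 xs hxs.le z)) ≤ ‖u‖ := by linarith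
      _ ≤ B := le_max_left _ _
  have hub_v : ∀ z : ℝ, Real.exp (-(v (projIcc 0 xs hxs.le z))) ≤ M := by
    intro z
    apply Real.exp_le_exp.2
    have h1 : |v (projIcc 0 xs hxs.le z)| ≤ ‖v‖ := by
      simpa [Real.norm_eq_abs] using v.norm_coe_le_norm (projIcc 0 xs hxs.le z)
    have := abs_le.1 h1
    calc -(v (projIcc 0 xs hxs.le z)) ≤ ‖v‖ := by linarith
      _ ≤ B := le_max_right _ _
  have hlb_u : ∀ z : ℝ, Real.exp (-B) ≤ Real.exp (-(u (projIcc 0 xs hxs.le z))) := by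
    intro z
    apply Real.exp_le_exp.2
    have h1 : |u (projIcc 0 xs hxs.le z)| ≤ ‖u‖ := by
      simpa [Real.norm_eq_abs] using u.norm_coe_le_norm (projIcc 0 xs hxs.le z)
    have := abs_le.1 h1
    have h2 : ‖u‖ ≤ B := le_max_left _ _
    linarith
  have hpt : ∀ z : ℝ,
      |Real.exp (-(u (projIcc 0 xs hxs.le z))) - Real.exp (-(v (projIcc 0 xs hxs.le z)))| ≤
        M * D := by
    intro z
    set p := projIcc 0 xs hxs.le z
    have hru : -(u p) ≤ B := by
      have h1 : |u p| ≤ ‖u‖ := by simpa [Real.norm_eq_abs] using u.norm_coe_le_norm p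
      have := abs_le.1 h1
      have h2 : ‖u‖ ≤ B := le_max_left _ _
      linarith
    have hrv : -(v p) ≤ B := by
      have h1 : |v p| ≤ ‖v‖ := by simpa [Real.norm_eq_abs] using v.norm_coe_le_norm p
      have := abs_le.1 h1
      have h2 : ‖v‖ ≤ B := le_max_right _ _
      linarith
    have hl := exp_lip_s19 hru hrv
    have h3 : |(-(u p)) - (-(v p))| ≤ D := by
      have h4 : |(u - v) p| ≤ ‖u - v‖ := by
        simpa [Real.norm_eq_abs] using (u - v).norm_coe_le_norm p
      have h5 : (u - v) p = u p - v p := by simp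
      rw [h5] at h4
      calc |(-(u p)) - (-(v p))| = |u p - v p| := by rw [abs_sub_comm]; ring_nf
        _ ≤ D := h4
    calc |Real.exp (-(u p)) - Real.exp (-(v p))| ≤ Real.exp B * |(-(u p)) - (-(v p))| := hl
      _ ≤ M * D := by
          apply mul_le_mul_of_nonneg_left h3 (Real.exp_pos B).le
  -- basic setup
  set τu := tau xs hxs.le u with hτudef
  set τv := tau xs hxs.le v with hτvdef
  have hτu1 : t₁ ≤ τu := (le_min_iff.1 ht₁τ).1
  have hτv1 : t₁ ≤ τv := (le_min_iff.1 ht₁τ).2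
  have hsu_mem : min t τu ∈ Icc (0:ℝ) τu :=
    ⟨le_min (ht₁.le.trans ht) (ht₁.le.trans hτu1), min_le_right _ _⟩
  have hsv_mem : min t τv ∈ Icc (0:ℝ) τv :=
    ⟨le_min (ht₁.le.trans ht) (ht₁.le.trans hτv1), min_le_right _ _⟩
  obtain ⟨haI, hWa⟩ := hΥu _ hsu_mem
  obtain ⟨hbI, hWb⟩ := hΥv _ hsv_mem
  set a := Υu (min t τu) with hadef
  set b := Υv (min t τv) with hbdef
  have ha0 : 0 ≤ a := haI.1
  have haxs : a ≤ xs := haI.2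
  have hb0 : 0 ≤ b := hbI.1
  have hbxs : b ≤ xs := hbI.2
  have ht₁su : t₁ ≤ min t τu := le_min ht hτu1
  have ht₁sv : t₁ ≤ min t τv := le_min ht hτv1
  -- 2 t₁ ≤ a² M and 2 t₁ ≤ xs² M
  have ha2 : 2 * t₁ ≤ a ^ 2 * M := by
    have h1 : Wu xs hxs.le u a ≤ a ^ 2 * M / 2 := Wu_le xs hxs.le u M hub_u ha0
    rw [hWa] at h1
    linarith
  have hxs2 : 2 * t₁ ≤ xs ^ 2 * M := by
    have h1 : Wu xs hxs.le u xs ≤ xs ^ 2 * M / 2 := Wu_le xs hxs.le u M hub_u hxs.le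
    have h2 : τu = Wu xs hxs.le u xs := rfl
    rw [← h2] at h1
    linarith
  -- upper bound on |W_u(a) - W_u(b)|
  have hτdiff : |τu - τv| ≤ xs ^ 2 / 2 * (M * D) := by
    have := Wu_diff_bound xs hxs.le u v (M * D) (mul_nonneg hMpos.le hD0) hpt hxs.le
    exact this
  have hmins : |min t τu - min t τv| ≤ xs ^ 2 / 2 * (M * D) := by
    have h1 := abs_min_sub_min_le_max t τu t τv
    simpa using h1.trans (by simpa using hτdiff)
  have hWub : |Wu xs hxs.le u b - Wu xs hxs.le v b| ≤ xs ^ 2 / 2 * (M * D) := by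
    have h1 := Wu_diff_bound xs hxs.le u v (M * D) (mul_nonneg hMpos.le hD0) hpt hb0
    have h2 : b ^ 2 / 2 * (M * D) ≤ xs ^ 2 / 2 * (M * D) := by
      have : b ^ 2 ≤ xs ^ 2 := by nlinarith
      nlinarith [mul_nonneg hMpos.le hD0]
    exact h1.trans h2
  have hWab : |Wu xs hxs.le u a - Wu xs hxs.le u b| ≤ xs ^ 2 * (M * D) := by
    have hid : Wu xs hxs.le u a - Wu xs hxs.le u b =
        (min t τu - min t τv) + (Wu xs hxs.le v b - Wu xs hxs.le u b) := by
      rw [hWa, hWb]; ring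
    rw [hid]
    calc |(min t τu - min t τv) + (Wu xs hxs.le v b - Wu xs hxs.le u b)|
        ≤ |min t τu - min t τv| + |Wu xs hxs.le v b - Wu xs hxs.le u b| := abs_add_le _ _
      _ ≤ xs ^ 2 / 2 * (M * D) + xs ^ 2 / 2 * (M * D) := by
          rw [abs_sub_comm (Wu xs hxs.le v b)]
          exact add_le_add hmins hWub
      _ = xs ^ 2 * (M * D) := by ring
  -- lower bound: |a²-b²| * exp(-B) / 2 ≤ |W_u(a) - W_u(b)|
  have hmM : Real.exp (-B) * M = 1 := by
    rw [hMdef, ← Real.exp_add]; simp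
  have hsq : |a ^ 2 - b ^ 2| * Real.exp (-B) / 2 ≤ |Wu xs hxs.le u a - Wu xs hxs.le u b| := by
    rcases le_total b a with hba | hab
    · have h1 := Wu_diff_lower xs hxs.le u (Real.exp (-B)) hlb_u hb0 hba
      have h2 : |a ^ 2 - b ^ 2| = a ^ 2 - b ^ 2 :=
        abs_of_nonneg (sub_nonneg.2 (pow_le_pow_left₀ hb0 hba 2))
      rw [h2]
      exact h1.trans (le_abs_self _)
    · have h1 := Wu_diff_lower xs hxs.le u (Real.exp (-B)) hlb_u ha0 hab
      have h2 : |a ^ 2 - b ^ 2| = b ^ 2 - a ^ 2 := by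
        rw [abs_sub_comm]; exact abs_of_nonneg (sub_nonneg.2 (pow_le_pow_left₀ ha0 hab 2))
      rw [h2, abs_sub_comm]
      exact h1.trans (le_abs_self _)
  have hsqbound : |a ^ 2 - b ^ 2| ≤ 2 * xs ^ 2 * M ^ 2 * D := by
    have h1 : |a ^ 2 - b ^ 2| * Real.exp (-B) ≤ 2 * xs ^ 2 * (M * D) := by
      have := hsq.trans hWab
      linarith
    have h2 := mul_le_mul_of_nonneg_right h1 hMpos.le
    calc |a ^ 2 - b ^ 2| = |a ^ 2 - b ^ 2| * (Real.exp (-B) * M) := by rw [hmM]; ring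
      _ = |a ^ 2 - b ^ 2| * Real.exp (-B) * M := by ring
      _ ≤ 2 * xs ^ 2 * (M * D) * M := h2
      _ = 2 * xs ^ 2 * M ^ 2 * D := by ring
  set c := |a - b| with hcdef
  have hc0 : 0 ≤ c := abs_nonneg _
  have h1 : c * (a + b) ≤ 2 * xs ^ 2 * M ^ 2 * D := by
    have : c * (a + b) = |a ^ 2 - b ^ 2| := by
      rw [hcdef, ← abs_of_nonneg (by linarith : (0:ℝ) ≤ a + b), ← abs_mul]
      ring_nf
    rw [this]; exact hsqbound
  -- final arithmetic: c ≤ xs^5 M^6 / t₁^2 * D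
  have hca : c * a ≤ 2 * xs ^ 2 * M ^ 2 * D := by nlinarith
  have hca2 : c * a ^ 2 ≤ 2 * xs ^ 3 * M ^ 2 * D := by
    have h2 := mul_le_mul_of_nonneg_right hca ha0
    have h3 : 2 * xs ^ 2 * M ^ 2 * D * a ≤ 2 * xs ^ 2 * M ^ 2 * D * xs := by
      apply mul_le_mul_of_nonneg_left haxs
      positivity
    nlinarith
  have hkey : c * t₁ ^ 2 ≤ xs ^ 5 * M ^ 6 * D := by
    have h4 : c * (2 * t₁) ≤ 2 * xs ^ 3 * M ^ 3 * D := by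
      have h5 : c * (2 * t₁) ≤ c * (a ^ 2 * M) := by
        apply mul_le_mul_of_nonneg_left ha2 hc0
      have h6 : c * a ^ 2 * M ≤ 2 * xs ^ 3 * M ^ 2 * D * M :=
        mul_le_mul_of_nonneg_right hca2 hMpos.le
      nlinarith
    -- c * t₁ ≤ xs^3 M^3 D, and t₁ ≤ xs^2 M / 2 ≤ xs^2 M^3
    have h7 : c * t₁ ≤ xs ^ 3 * M ^ 3 * D := by linarith
    have h8 := mul_le_mul_of_nonneg_right h7 ht₁.le
    have h9 : xs ^ 3 * M ^ 3 * D * t₁ ≤ xs ^ 3 * M ^ 3 * D * (xs ^ 2 * M) := by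
      apply mul_le_mul_of_nonneg_left (by linarith) (by positivity)
    have h10 : xs ^ 3 * M ^ 3 * D * (xs ^ 2 * M) ≤ xs ^ 5 * M ^ 6 * D := by
      have hp : M ^ 4 ≤ M ^ 6 := pow_le_pow_right₀ (by linarith) (by norm_num)
      calc xs ^ 3 * M ^ 3 * D * (xs ^ 2 * M) = xs ^ 5 * D * M ^ 4 := by ring
        _ ≤ xs ^ 5 * D * M ^ 6 := mul_le_mul_of_nonneg_left hp (by positivity)
        _ = xs ^ 5 * M ^ 6 * D := by ring
    calc c * t₁ ^ 2 = c * t₁ * t₁ := by ring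
      _ ≤ xs ^ 3 * M ^ 3 * D * t₁ := h8
      _ ≤ xs ^ 3 * M ^ 3 * D * (xs ^ 2 * M) := h9
      _ ≤ xs ^ 5 * M ^ 6 * D := h10
  have hmain : c ≤ xs ^ 5 * M ^ 6 / t₁ ^ 2 * D := by
    rw [div_mul_eq_mul_div, le_div_iff₀ (by positivity : (0:ℝ) < t₁ ^ 2)]
    linarith
  -- the target constant dominates xs^5 M^6 / t₁^2
  have hexp1 : 1 ≤ Real.exp (xs ^ 4 * M ^ 6 / t₁ ^ 2) := Real.one_le_exp (by positivity)
  have hS : 0 ≤ 1 / 2 * xs ^ 2 * M * max (xs / t₁ * Real.exp (2 * ‖u‖)) (xs / t₁ * Real.exp (2 * ‖v‖)) := by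
    have : 0 ≤ xs / t₁ * Real.exp (2 * ‖u‖) := by positivity
    have hmax : 0 ≤ max (xs / t₁ * Real.exp (2 * ‖u‖)) (xs / t₁ * Real.exp (2 * ‖v‖)) :=
      this.trans (le_max_left _ _)
    positivity
  calc c ≤ xs ^ 5 * M ^ 6 / t₁ ^ 2 * D := hmain
    _ ≤ (Real.exp (xs ^ 4 * M ^ 6 / t₁ ^ 2) * (xs ^ 5 * M ^ 6 / t₁ ^ 2) +
          1 / 2 * xs ^ 2 * M *
            max (xs / t₁ * Real.exp (2 * ‖u‖)) (xs / t₁ * Real.exp (2 * ‖v‖))) * D := by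
        apply mul_le_mul_of_nonneg_right _ hD0
        have hE : xs ^ 5 * M ^ 6 / t₁ ^ 2 ≤
            Real.exp (xs ^ 4 * M ^ 6 / t₁ ^ 2) * (xs ^ 5 * M ^ 6 / t₁ ^ 2) :=
          le_mul_of_one_le_left (by positivity) hexp1
        linarith
end
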